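/- Let ψ = Γ'/Γ be the digamma function and d ≥ 1. Then for all x ∈ [0,2], the derivative of ρ(x) := x·Γ((d+x)/2) − d·2^{2−x}·Γ(2−x/2)·Γ(d/2) satisfies |ρ'(x)| ≤ C·d·Γ(d/2)·log(1+d) for a constant C independent of d. -/

import Mathlib

open Real

lemma diffGamma' {t : ℝ} (ht : 0 < t) : DifferentiableAt ℝ Real.Gamma t :=
  Real.differentiableAt_Gamma (fun m => ne_of_gt (lt_of_le_of_lt (neg_nonpos.2 m.cast_nonneg) ht))

lemma gamma_le_max' {a b t : ℝ} (ha : 0 < a) (h1 : a ≤ t) (h2 : t ≤ b) :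
    Real.Gamma t ≤ max (Real.Gamma a) (Real.Gamma b) :=
  Real.convexOn_Gamma.le_on_segment (Set.mem_Ioi.2 ha)
    (Set.mem_Ioi.2 (lt_of_lt_of_le ha (h1.trans h2)))
    (by rw [segment_eq_Icc (h1.trans h2)]; exact ⟨h1, h2⟩)

lemma G_lower' {z : ℝ} (hz : 1/2 ≤ z) : -(4 * Real.Gamma (z - 1/4)) ≤ deriv Real.Gamma z := by
  have h0 : (0:ℝ) < z - 1/4 := by linarith
  have hs := Real.convexOn_Gamma.slope_le_deriv (Set.mem_Ioi.2 h0)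
    (Set.mem_Ioi.2 (by linarith : (0:ℝ) < z)) (by linarith) (diffGamma' (by linarith))
  rw [slope_def_field] at hs
  have hpos := Real.Gamma_pos_of_pos (show (0:ℝ) < z by linarith)
  have heq : (Real.Gamma z - Real.Gamma (z - 1/4)) / (z - (z - 1/4))
      = 4 * (Real.Gamma z - Real.Gamma (z - 1/4)) := by ring_nf
  rw [heq] at hs
  nlinarith

lemma G_upper' {z B : ℝ} (hz : 0 < z) (hB : 2 ≤ B) (hzB : z * (z + 1) ≤ B^2) :
    deriv Real.Gamma z ≤ 2 * Real.Gamma z * Real.log B := by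
  have hlogB : 0 < Real.log B := Real.log_pos (by linarith)
  set δ : ℝ := 1 / Real.log B with hδdef
  have hδ : 0 < δ := by positivity
  have hlog2 := Real.log_two_gt_d9
  have hlogB2 : (1:ℝ)/2 ≤ Real.log B :=
    le_trans (by norm_num) (le_trans hlog2.le (Real.log_le_log (by norm_num) hB))
  have hδ2 : δ ≤ 2 := by
    rw [hδdef, div_le_iff₀ hlogB]; linarith
  have hs := Real.convexOn_Gamma.deriv_le_slope (Set.mem_Ioi.2 hz)
    (Set.mem_Ioi.2 (by linarith : (0:ℝ) < z + δ)) (by linarith) (diffGamma' hz)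
  rw [slope_def_field] at hs
  have hslope : (Real.Gamma (z + δ) - Real.Gamma z) / (z + δ - z)
      = (Real.Gamma (z + δ) - Real.Gamma z) / δ := by ring_nf
  rw [hslope] at hs
  have hΓz := Real.Gamma_pos_of_pos hz
  have hΓz2 := Real.Gamma_pos_of_pos (show (0:ℝ) < z + 2 by linarith)
  have key := Real.convexOn_log_Gamma.2 (Set.mem_Ioi.2 hz)
    (Set.mem_Ioi.2 (show (0:ℝ) < z + 2 by linarith))
    (show (0:ℝ) ≤ 1 - δ/2 by linarith) (show (0:ℝ) ≤ δ/2 by linarith) (by ring)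
  simp only [Function.comp_apply, smul_eq_mul] at key
  have harg : (1 - δ/2) * z + δ/2 * (z + 2) = z + δ := by ring
  rw [harg] at key
  have hle : Real.Gamma (z + δ) ≤ Real.Gamma z ^ (1 - δ/2) * Real.Gamma (z + 2) ^ (δ/2) := by
    have := Real.exp_le_exp.2 key
    rw [Real.exp_log (Real.Gamma_pos_of_pos (by linarith : (0:ℝ) < z + δ)), Real.exp_add] at this
    rw [Real.rpow_def_of_pos hΓz, Real.rpow_def_of_pos hΓz2]
    calc Real.Gamma (z + δ) ≤ _ := this
    _ = _ := by rw [mul_comm (1 - δ/2) _, mul_comm (δ/2) _]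
  have hΓz2eq : Real.Gamma (z + 2) = z * (z + 1) * Real.Gamma z := by
    rw [show z + 2 = (z + 1) + 1 by ring, Real.Gamma_add_one (by linarith),
      Real.Gamma_add_one (ne_of_gt hz)]; ring
  have hle2 : Real.Gamma (z + δ) ≤ Real.Gamma z * (z * (z+1)) ^ (δ/2) := by
    calc Real.Gamma (z + δ) ≤ _ := hle
    _ = Real.Gamma z ^ (1 - δ/2) * ((z * (z+1)) ^ (δ/2) * Real.Gamma z ^ (δ/2)) := by
        rw [hΓz2eq, Real.mul_rpow (by positivity) hΓz.le]
    _ = Real.Gamma z ^ ((1 - δ/2) + δ/2) * (z * (z+1)) ^ (δ/2) := by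
        rw [Real.rpow_add hΓz]; ring
    _ = Real.Gamma z * (z * (z+1)) ^ (δ/2) := by norm_num
  have hstep3 : (z * (z+1)) ^ (δ/2) ≤ Real.exp 1 := by
    have h1 : (z * (z+1)) ^ (δ/2) ≤ (B^2) ^ (δ/2) :=
      Real.rpow_le_rpow (by positivity) hzB (by positivity)
    have h2 : (B^2:ℝ) ^ (δ/2) = B ^ δ := by
      rw [← Real.rpow_natCast B 2, ← Real.rpow_mul (by linarith : (0:ℝ) ≤ B)]
      congr 1; ring
    have h3 : B ^ δ = Real.exp 1 := by
      rw [Real.rpow_def_of_pos (by linarith : (0:ℝ) < B), hδdef, mul_one_div,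
        div_self (ne_of_gt hlogB)]
    rw [h2, h3] at h1; exact h1
  have hexp := Real.exp_one_lt_d9
  have hle3 : Real.Gamma (z + δ) ≤ Real.Gamma z * Real.exp 1 :=
    hle2.trans (by nlinarith [hstep3, hΓz.le])
  have heq : (Real.Gamma z * Real.exp 1 - Real.Gamma z) / δ
      = Real.Gamma z * (Real.exp 1 - 1) * Real.log B := by
    rw [hδdef, div_div_eq_mul_div, div_one]; ring
  calc deriv Real.Gamma z ≤ (Real.Gamma (z + δ) - Real.Gamma z) / δ := hs
  _ ≤ (Real.Gamma z * Real.exp 1 - Real.Gamma z) / δ := by gcongr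
  _ = Real.Gamma z * (Real.exp 1 - 1) * Real.log B := heq
  _ ≤ 2 * Real.Gamma z * Real.log B := by nlinarith [hexp, mul_pos hΓz hlogB]

lemma sqrt_pi_ge' : (1:ℝ) ≤ Real.sqrt π := Real.one_le_sqrt.2 (by linarith [Real.pi_gt_three])

lemma gamma_half_lb' : ∀ d : ℕ, 1 ≤ d → (1/2:ℝ) ≤ Real.Gamma (d/2)
  | 1, _ => by
      norm_num [Real.Gamma_one_half_eq]
      linarith [sqrt_pi_ge']
  | 2, _ => by norm_num [Real.Gamma_one]
  | 3, _ => by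
      have h : ((3:ℕ):ℝ)/2 = 1/2 + 1 := by norm_num
      rw [h, Real.Gamma_add_one (by norm_num), Real.Gamma_one_half_eq]
      linarith [sqrt_pi_ge']
  | (n+4), _ => by
      have ih := gamma_half_lb' (n+2) (by omega)
      have h1 : (((n:ℕ)+4:ℕ):ℝ)/2 = ((n+2:ℕ):ℝ)/2 + 1 := by push_cast; ring
      have h2 : ((n+2:ℕ):ℝ)/2 ≠ 0 := by
        have : (0:ℝ) < ((n+2:ℕ):ℝ)/2 := by push_cast; linarith [Nat.cast_nonneg (α:=ℝ) n]
        exact ne_of_gt this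
      rw [h1, Real.Gamma_add_one h2]
      have h3 : (1:ℝ) ≤ ((n+2:ℕ):ℝ)/2 := by
        have : (2:ℝ) ≤ ((n:ℝ)+2) := by linarith [Nat.cast_nonneg (α:=ℝ) n]
        push_cast; linarith
      nlinarith

lemma gamma_le_one' {t : ℝ} (h1 : 1 ≤ t) (h2 : t ≤ 2) : Real.Gamma t ≤ 1 := by
  have := gamma_le_max' one_pos h1 h2
  rwa [Real.Gamma_one, Real.Gamma_two, max_self] at this

lemma gamma_quarter' : Real.Gamma (1/4 : ℝ) ≤ 4 := by
  have h54 : Real.Gamma (5/4 : ℝ) ≤ 1 := gamma_le_one' (by norm_num) (by norm_num)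
  have := Real.Gamma_add_one (show (1/4:ℝ) ≠ 0 by norm_num)
  norm_num at this
  nlinarith

lemma gamma_three_quarter' : Real.Gamma (3/4 : ℝ) ≤ 4/3 := by
  have h74 : Real.Gamma (7/4 : ℝ) ≤ 1 := gamma_le_one' (by norm_num) (by norm_num)
  have := Real.Gamma_add_one (show (3/4:ℝ) ≠ 0 by norm_num)
  norm_num at this
  nlinarith

lemma gamma_three' : Real.Gamma (3:ℝ) = 2 := by
  rw [show (3:ℝ) = 2 + 1 by norm_num, Real.Gamma_add_one (by norm_num), Real.Gamma_two]
  norm_num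

set_option maxHeartbeats 4000000 in
/-- The derivative of ρ(x) = x·Γ((d+x)/2) − d·2^{2−x}·Γ(2−x/2)·Γ(d/2) satisfies
|ρ'(x)| ≤ C·d·Γ(d/2)·log(1+d) on [0,2], with C independent of d. -/
theorem stmt_19 :
    ∃ C : ℝ, 0 < C ∧ ∀ (d : ℕ), 1 ≤ d → ∀ x ∈ Set.Icc (0:ℝ) 2,
      |deriv (fun y : ℝ => y * Real.Gamma (((d:ℝ) + y)/2)
          - (d:ℝ) * (2:ℝ) ^ (2 - y) * Real.Gamma (2 - y/2) * Real.Gamma ((d:ℝ)/2)) x|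
        ≤ C * (d:ℝ) * Real.Gamma ((d:ℝ)/2) * Real.log (1 + (d:ℝ)) := by
  refine ⟨1000, by norm_num, fun d hd x hx => ?_⟩
  obtain ⟨hx0, hx2⟩ := hx
  have hD1 : (1:ℝ) ≤ (d:ℝ) := by exact_mod_cast hd
  set D : ℝ := (d:ℝ) with hDdef
  set z : ℝ := (D + x)/2 with hzdef
  set w : ℝ := 2 - x/2 with hwdef
  set Γh : ℝ := Real.Gamma (D/2) with hΓhdef
  set L : ℝ := Real.log (1 + D) with hLdef
  have hzpos : (0:ℝ) < z := by rw [hzdef]; linarith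
  have hwpos : (0:ℝ) < w := by rw [hwdef]; linarith
  -- compute the derivative
  have h1 : HasDerivAt (fun y : ℝ => (D + y)/2) (1/2) x := by
    simpa using ((hasDerivAt_id x).const_add D).div_const 2
  have hz : HasDerivAt (fun y : ℝ => Real.Gamma ((D+y)/2)) (deriv Real.Gamma z * (1/2)) x :=
    by have := (diffGamma' hzpos).hasDerivAt.comp x h1; exact this
  have hterm1 : HasDerivAt (fun y : ℝ => y * Real.Gamma ((D+y)/2))
      (1 * Real.Gamma z + x * (deriv Real.Gamma z * (1/2))) x :=
    (hasDerivAt_id x).mul hz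
  have hinner2 : HasDerivAt (fun y : ℝ => 2 - y) (-1:ℝ) x := by
    simpa using (hasDerivAt_id x).const_sub (2:ℝ)
  have h2 : HasDerivAt (fun y : ℝ => (2:ℝ) ^ (2 - y)) ((2:ℝ)^(2-x) * Real.log 2 * (-1)) x :=
    ((Real.hasStrictDerivAt_const_rpow two_pos (2-x)).hasDerivAt).comp x hinner2
  have hinner3 : HasDerivAt (fun y : ℝ => 2 - y/2) (-(1/2):ℝ) x := by
    simpa using ((hasDerivAt_id x).div_const 2).const_sub (2:ℝ)
  have hw : HasDerivAt (fun y : ℝ => Real.Gamma (2 - y/2)) (deriv Real.Gamma w * (-(1/2))) x :=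
    by have := (diffGamma' hwpos).hasDerivAt.comp x hinner3; exact this
  have hA : HasDerivAt (fun y : ℝ => D * (2:ℝ)^(2-y))
      (D * ((2:ℝ)^(2-x) * Real.log 2 * (-1))) x := h2.const_mul D
  have hB : HasDerivAt (fun y : ℝ => D * (2:ℝ)^(2-y) * Real.Gamma (2 - y/2))
      (D * ((2:ℝ)^(2-x) * Real.log 2 * (-1)) * Real.Gamma w
        + D * (2:ℝ)^(2-x) * (deriv Real.Gamma w * (-(1/2)))) x := hA.mul hw
  have hC : HasDerivAt (fun y : ℝ => D * (2:ℝ)^(2-y) * Real.Gamma (2 - y/2) * Real.Gamma (D/2))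
      ((D * ((2:ℝ)^(2-x) * Real.log 2 * (-1)) * Real.Gamma w
        + D * (2:ℝ)^(2-x) * (deriv Real.Gamma w * (-(1/2)))) * Γh) x := hB.mul_const _
  have hderiv : deriv (fun y : ℝ => y * Real.Gamma ((D + y)/2)
          - D * (2:ℝ) ^ (2 - y) * Real.Gamma (2 - y/2) * Real.Gamma (D/2)) x
      = (1 * Real.Gamma z + x * (deriv Real.Gamma z * (1/2)))
        - ((D * ((2:ℝ)^(2-x) * Real.log 2 * (-1)) * Real.Gamma w
            + D * (2:ℝ)^(2-x) * (deriv Real.Gamma w * (-(1/2)))) * Γh) :=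
    (hterm1.sub hC).deriv
  rw [hderiv]
  -- now the bounds
  set Gz : ℝ := deriv Real.Gamma z
  set Gw : ℝ := deriv Real.Gamma w
  set P : ℝ := (2:ℝ)^(2-x) with hPdef
  have hΓh : (1:ℝ)/2 ≤ Γh := gamma_half_lb' d hd
  have hΓhpos : (0:ℝ) < Γh := by linarith
  have hΓzpos := Real.Gamma_pos_of_pos hzpos
  have hΓwpos := Real.Gamma_pos_of_pos hwpos
  have hDhalf : (0:ℝ) < D/2 := by linarith
  -- Γ z ≤ D * Γh
  have hΓhalf1 : Real.Gamma (D/2 + 1) = (D/2) * Γh := Real.Gamma_add_one (ne_of_gt hDhalf)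
  have hΓzle : Real.Gamma z ≤ D * Γh := by
    have h := gamma_le_max' hDhalf (show D/2 ≤ z by rw [hzdef]; linarith)
      (show z ≤ D/2 + 1 by rw [hzdef]; linarith)
    rw [hΓhalf1] at h
    have : max Γh ((D/2) * Γh) ≤ D * Γh := max_le (by nlinarith) (by nlinarith)
    exact h.trans this
  -- L bounds
  have hlog2 := Real.log_two_gt_d9
  have hlog2' := Real.log_two_lt_d9
  have hL : (1:ℝ)/2 ≤ L := by
    have : Real.log 2 ≤ L := Real.log_le_log (by norm_num) (by linarith)
    linarith
  have hLpos : (0:ℝ) < L := by linarith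
  -- |Gz| bound
  have hGzu : Gz ≤ 2 * Real.Gamma z * L := by
    have := G_upper' hzpos (show (2:ℝ) ≤ 1 + D by linarith)
      (show z * (z + 1) ≤ (1+D)^2 by rw [hzdef]; nlinarith)
    exact this
  have hGzl : -(4 * Real.Gamma (z - 1/4)) ≤ Gz := G_lower' (by rw [hzdef]; linarith)
  have hΓzq : Real.Gamma (z - 1/4) ≤ 8 * (D * Γh) := by
    have h := gamma_le_max' (show (0:ℝ) < 1/4 by norm_num)
      (show (1:ℝ)/4 ≤ z - 1/4 by rw [hzdef]; linarith)
      (show z - 1/4 ≤ D/2 + 1 by rw [hzdef]; linarith)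
    rw [hΓhalf1] at h
    have : max (Real.Gamma (1/4)) ((D/2) * Γh) ≤ 8 * (D * Γh) :=
      max_le (by nlinarith [gamma_quarter']) (by nlinarith)
    exact h.trans this
  have habsGz : |Gz| ≤ 64 * (D * Γh) * L := by
    rw [abs_le]
    constructor
    · have : -(32 * (D * Γh)) ≤ Gz := by nlinarith
      nlinarith [mul_pos (mul_pos (show (0:ℝ) < D by linarith) hΓhpos) hLpos]
    · have : Gz ≤ 2 * (D * Γh) * L := by nlinarith
      nlinarith [mul_pos (mul_pos (show (0:ℝ) < D by linarith) hΓhpos) hLpos]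
  -- Γ w ≤ 1
  have hΓwle : Real.Gamma w ≤ 1 := gamma_le_one' (by rw [hwdef]; linarith) (by rw [hwdef]; linarith)
  -- |Gw| ≤ 6
  have hGwu : Gw ≤ 2 := by
    have hs := Real.convexOn_Gamma.deriv_le_slope (Set.mem_Ioi.2 hwpos)
      (Set.mem_Ioi.2 (show (0:ℝ) < w + 1 by linarith)) (by linarith) (diffGamma' hwpos)
    rw [slope_def_field] at hs
    have heq : (Real.Gamma (w+1) - Real.Gamma w) / (w + 1 - w)
        = Real.Gamma (w+1) - Real.Gamma w := by ring_nf
    rw [heq] at hs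
    have hw1 : Real.Gamma (w+1) ≤ 2 := by
      have h := gamma_le_max' (show (0:ℝ) < 2 by norm_num)
        (show (2:ℝ) ≤ w + 1 by rw [hwdef]; linarith)
        (show w + 1 ≤ 3 by rw [hwdef]; linarith)
      rw [Real.Gamma_two, gamma_three'] at h
      exact h.trans (by norm_num)
    linarith
  have hGwl : -(6:ℝ) ≤ Gw := by
    have h := G_lower' (show (1:ℝ)/2 ≤ w by rw [hwdef]; linarith)
    have hq : Real.Gamma (w - 1/4) ≤ 4/3 := by
      have h2 := gamma_le_max' (show (0:ℝ) < 3/4 by norm_num)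
        (show (3:ℝ)/4 ≤ w - 1/4 by rw [hwdef]; linarith)
        (show w - 1/4 ≤ 2 by rw [hwdef]; linarith)
      rw [Real.Gamma_two] at h2
      exact h2.trans (max_le gamma_three_quarter' (by norm_num))
    linarith
  have habsGw : |Gw| ≤ 6 := abs_le.2 ⟨hGwl, by linarith⟩
  -- P bounds
  have hPpos : (0:ℝ) < P := Real.rpow_pos_of_pos two_pos _
  have hP4 : P ≤ 4 := by
    have h := Real.rpow_le_rpow_of_exponent_le one_le_two (show 2 - x ≤ (2:ℝ) by linarith)
    have h4 : (2:ℝ)^(2:ℝ) = 4 := by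
      have := Real.rpow_natCast (2:ℝ) 2
      norm_num at this
      linarith [this]
    rw [h4] at h
    exact h
  -- assemble
  have hlog2pos : (0:ℝ) < Real.log 2 := by linarith
  have habsA : |1 * Real.Gamma z + x * (Gz * (1/2))| ≤ D * Γh + 64 * (D * Γh) * L := by
    calc |1 * Real.Gamma z + x * (Gz * (1/2))|
        ≤ |1 * Real.Gamma z| + |x * (Gz * (1/2))| := abs_add_le _ _
    _ = Real.Gamma z + x * (|Gz| * (1/2)) := by
        rw [one_mul, abs_of_pos hΓzpos, abs_mul, abs_mul, abs_of_nonneg hx0]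
        norm_num
    _ ≤ D * Γh + 64 * (D * Γh) * L := by nlinarith [abs_nonneg Gz]
  have habsB : |(D * (P * Real.log 2 * (-1)) * Real.Gamma w + D * P * (Gw * (-(1/2)))) * Γh|
      ≤ 16 * D * Γh := by
    have hs1 : |D * (P * Real.log 2 * (-1)) * Real.Gamma w| = D * (P * Real.log 2) * Real.Gamma w := by
      rw [show D * (P * Real.log 2 * (-1)) * Real.Gamma w
          = -(D * (P * Real.log 2) * Real.Gamma w) by ring, abs_neg, abs_of_nonneg]
      exact mul_nonneg (mul_nonneg (by linarith) (by nlinarith)) hΓwpos.le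
    have hs2 : |D * P * (Gw * (-(1/2)))| = D * P * (|Gw| * (1/2)) := by
      rw [abs_mul, abs_mul, abs_mul, abs_of_nonneg (show (0:ℝ) ≤ D by linarith),
        abs_of_nonneg hPpos.le]
      norm_num
    calc |(D * (P * Real.log 2 * (-1)) * Real.Gamma w + D * P * (Gw * (-(1/2)))) * Γh|
        = |D * (P * Real.log 2 * (-1)) * Real.Gamma w + D * P * (Gw * (-(1/2)))| * Γh := by
          rw [abs_mul, abs_of_pos hΓhpos]
    _ ≤ (|D * (P * Real.log 2 * (-1)) * Real.Gamma w| + |D * P * (Gw * (-(1/2)))|) * Γh := by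
          have := abs_add_le (D * (P * Real.log 2 * (-1)) * Real.Gamma w) (D * P * (Gw * (-(1/2))))
          nlinarith
    _ = (D * (P * Real.log 2) * Real.Gamma w + D * P * (|Gw| * (1/2))) * Γh := by rw [hs1, hs2]
    _ ≤ (D * 4 * 1 + D * 4 * 3) * Γh := by
          have hDpos : (0:ℝ) < D := by linarith
          have hPl : (0:ℝ) ≤ P * Real.log 2 := mul_nonneg hPpos.le hlog2pos.le
          have hb : P * Real.log 2 ≤ 4 := by
            have h1 : Real.log 2 ≤ 1 := by linarith
            calc P * Real.log 2 ≤ 4 * 1 := mul_le_mul hP4 h1 hlog2pos.le (by norm_num)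
            _ = 4 := by norm_num
          have t1 : D * (P * Real.log 2) * Real.Gamma w ≤ D * 4 * 1 :=
            mul_le_mul (mul_le_mul le_rfl hb hPl hDpos.le) hΓwle hΓwpos.le (by linarith)
          have t2 : D * P * (|Gw| * (1/2)) ≤ D * 4 * 3 :=
            mul_le_mul (mul_le_mul le_rfl hP4 hPpos.le hDpos.le)
              (by linarith [abs_nonneg Gw] : |Gw| * (1/2) ≤ 3)
              (by positivity) (by linarith)
          have : D * (P * Real.log 2) * Real.Gamma w + D * P * (|Gw| * (1/2))
              ≤ D * 4 * 1 + D * 4 * 3 := add_le_add t1 t2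
          exact mul_le_mul_of_nonneg_right this hΓhpos.le
    _ ≤ 16 * D * Γh := by nlinarith
  calc |(1 * Real.Gamma z + x * (Gz * (1/2)))
        - ((D * (P * Real.log 2 * (-1)) * Real.Gamma w + D * P * (Gw * (-(1/2)))) * Γh)|
      ≤ |1 * Real.Gamma z + x * (Gz * (1/2))|
        + |(D * (P * Real.log 2 * (-1)) * Real.Gamma w + D * P * (Gw * (-(1/2)))) * Γh| :=
        abs_sub _ _
  _ ≤ (D * Γh + 64 * (D * Γh) * L) + 16 * D * Γh := by linarith
  _ ≤ 1000 * D * Γh * L := by nlinarith [mul_pos (mul_pos (show (0:ℝ) < D by linarith) hΓhpos) hLpos]
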